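/- Under the testimony model with a perfectly discriminating evidence, i.e. events E_T, E, H with P(E ∩ H) > 0, P(Eᶜ ∩ H) > 0, P(Eᶜ ∩ Hᶜ) > 0, P(E ∩ Hᶜ) = 0 (so P(E | Hᶜ) = 0), P(E_T | E ∩ H') = P(E_T | E) > 0 and P(E_T | Eᶜ ∩ H') = P(E_T | Eᶜ) > 0 for H' ∈ {H, Hᶜ}, set λ = P(E_T | Eᶜ)/P(E_T | E) and p = P(E | H). Then the effective Bayes factor equals P(E_T | H)/P(E_T | Hᶜ) = p/λ + 1 − p, and if λ ≤ 1 this is at most 1/λ: even though the ideal Bayes factor of E is infinite, the testified evidence cannot exceed the inverse of the lie factor. -/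
import Mathlib


open MeasureTheory Real

/-- The probability of an event `A` (as a real number). -/
noncomputable def pr {Ω : Type*} [MeasurableSpace Ω] (P : Measure Ω) (A : Set Ω) : ℝ :=
  (P A).toReal

/-- The conditional probability `P(A | B) = P(A ∩ B) / P(B)`. -/
noncomputable def cpr {Ω : Type*} [MeasurableSpace Ω] (P : Measure Ω) (A B : Set Ω) : ℝ :=
  pr P (A ∩ B) / pr P B

lemma pr_split {Ω : Type*} [MeasurableSpace Ω] (P : Measure Ω) [IsFiniteMeasure P]
    (A B : Set Ω) (hB : MeasurableSet B) :
    pr P A = pr P (A ∩ B) + pr P (A ∩ Bᶜ) := by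
  unfold pr
  rw [← Set.diff_eq, ← ENNReal.toReal_add (measure_ne_top _ _) (measure_ne_top _ _),
    measure_inter_add_diff A hB]

lemma pr_mono_zero {Ω : Type*} [MeasurableSpace Ω] (P : Measure Ω) [IsFiniteMeasure P]
    {A B : Set Ω} (h : pr P B = 0) (hs : A ⊆ B) : pr P A = 0 := by
  unfold pr at *
  have hB : P B = 0 := by
    have := (ENNReal.toReal_eq_zero_iff _).mp h
    rcases this with h' | h'
    · exact h'
    · exact absurd h' (measure_ne_top _ _)
  simp [measure_mono_null hs hB]

/-- Perfectly discriminating evidence (`P(E|Hᶜ) = 0`) reported through a testimony: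
the effective Bayes factor equals `p/λ + 1 − p` (with `p = P(E|H)` and lie factor `λ`),
and if `λ ≤ 1` it cannot exceed `1/λ`, even though the ideal Bayes factor is infinite. -/
theorem testimony_bound_perfect_evidence
    {Ω : Type*} [MeasurableSpace Ω] (P : Measure Ω) [IsProbabilityMeasure P]
    (Et E H : Set Ω)
    (hEt : MeasurableSet Et) (hE : MeasurableSet E) (hH : MeasurableSet H)
    (h1 : 0 < pr P (E ∩ H)) (h2 : 0 < pr P (Eᶜ ∩ H))
    (h4 : 0 < pr P (Eᶜ ∩ Hᶜ)) (h3 : pr P (E ∩ Hᶜ) = 0)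
    (ht1 : cpr P Et (E ∩ H) = cpr P Et E)
    (ht2 : cpr P Et (Eᶜ ∩ H) = cpr P Et Eᶜ)
    (ht4 : cpr P Et (Eᶜ ∩ Hᶜ) = cpr P Et Eᶜ)
    (hTE : 0 < cpr P Et E) (hTEc : 0 < cpr P Et Eᶜ) :
    cpr P Et H / cpr P Et Hᶜ =
        cpr P E H / (cpr P Et Eᶜ / cpr P Et E) + 1 - cpr P E H ∧
      (cpr P Et Eᶜ / cpr P Et E ≤ 1 →
        cpr P Et H / cpr P Et Hᶜ ≤ 1 / (cpr P Et Eᶜ / cpr P Et E)) := by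
  set a := pr P (E ∩ H) with ha
  set b := pr P (Eᶜ ∩ H) with hb
  set d := pr P (Eᶜ ∩ Hᶜ) with hd
  set tE := cpr P Et E with htE
  set tEc := cpr P Et Eᶜ with htEc
  -- masses of Et intersected with the four cells
  have e1 : pr P (Et ∩ (E ∩ H)) = tE * a := by
    have := ht1
    unfold cpr at this
    rw [← ha] at this
    field_simp at this
    linarith [this]
  have e2 : pr P (Et ∩ (Eᶜ ∩ H)) = tEc * b := by
    have := ht2
    unfold cpr at this
    rw [← hb] at this
    field_simp at this
    linarith [this]
  have e4 : pr P (Et ∩ (Eᶜ ∩ Hᶜ)) = tEc * d := by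
    have := ht4
    unfold cpr at this
    rw [← hd] at this
    field_simp at this
    linarith [this]
  have e3 : pr P (Et ∩ (E ∩ Hᶜ)) = 0 :=
    pr_mono_zero P h3 Set.inter_subset_right
  -- decompositions
  have hH1 : pr P H = a + b := by
    rw [pr_split P H E hE, ha, hb, Set.inter_comm H E, Set.inter_comm H Eᶜ]
  have hHc : pr P Hᶜ = d := by
    rw [pr_split P Hᶜ E hE, Set.inter_comm Hᶜ E, Set.inter_comm Hᶜ Eᶜ, h3, ← hd]
    ring
  have hEtH : pr P (Et ∩ H) = tE * a + tEc * b := by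
    rw [pr_split P (Et ∩ H) E hE, ← e1, ← e2]
    congr 1 <;> · congr 1; ext x; simp; tauto
  have hEtHc : pr P (Et ∩ Hᶜ) = tEc * d := by
    have c1 : Et ∩ Hᶜ ∩ E = Et ∩ (E ∩ Hᶜ) := by ext x; simp; tauto
    have c2 : Et ∩ Hᶜ ∩ Eᶜ = Et ∩ (Eᶜ ∩ Hᶜ) := by ext x; simp; tauto
    rw [pr_split P (Et ∩ Hᶜ) E hE, c1, c2, e3, e4]
    ring
  have hpa : 0 < a + b := by linarith
  have hcprEH : cpr P E H = a / (a + b) := by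
    unfold cpr; rw [← ha, hH1]
  have hcprEtH : cpr P Et H = (tE * a + tEc * b) / (a + b) := by
    unfold cpr; rw [hEtH, hH1]
  have hcprEtHc : cpr P Et Hᶜ = tEc := by
    unfold cpr; rw [hEtHc, hHc]; field_simp
  rw [hcprEH, hcprEtH, hcprEtHc]
  constructor
  · field_simp
    ring
  · intro hl
    have hle : tEc ≤ tE := by
      rw [div_le_one hTE] at hl
      exact hl
    rw [div_le_div_iff₀ (by positivity) (by positivity), one_mul,
      div_mul_div_comm, div_le_iff₀ (by positivity)]
    nlinarith [mul_pos hTEc h2, hle, hTE.le, hTEc.le, h1.le]
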